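/- Let L > 0. There exist λ ∈ ℂ and a nonzero y ∈ H^3(0,L) satisfying λ y + y' + y''' = 0 with y(0) = y'(0) = y(L) = y'(L) = 0 if and only if L ∈ 𝒩 := { 2π √((k² + l² + kl)/3) : k, l ∈ ℕ* }. -/

import Mathlib

open scoped BigOperators
open MeasureTheory intervalIntegral Real Set

noncomputable section
namespace Rosier
open Polynomial NNReal
/-- generalized exponential sum: (p+qx)e^{rx} + (u+vx)e^{sx} + (w+zx)e^{tx} -/
def es (p q u v w z r s t : ℂ) : ℝ → ℂ := fun x =>
  (p + q*x) * Complex.exp (r*x) + (u + v*x) * Complex.exp (s*x) + (w + z*x) * Complex.exp (t*x)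

lemma hasDerivAt_term (p q r : ℂ) (x : ℝ) :
    HasDerivAt (fun x : ℝ => (p + q*x) * Complex.exp (r*x))
      ((q + r*p + r*q*x) * Complex.exp (r*x)) x := by
  have hx : HasDerivAt (fun x : ℝ => (x : ℂ)) 1 x := Complex.ofRealCLM.hasDerivAt
  have h1 : HasDerivAt (fun x : ℝ => p + q*(x:ℂ)) q x := by
    simpa using ((hx.const_mul q).const_add p)
  have h2 : HasDerivAt (fun x : ℝ => Complex.exp (r*x)) (Complex.exp (r*x) * r) x := by
    simpa using (hx.const_mul r).cexp
  have := h1.mul h2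
  refine this.congr_deriv ?_
  ring

lemma hasDerivAt_es (p q u v w z r s t : ℂ) (x : ℝ) :
    HasDerivAt (es p q u v w z r s t)
      (es (q + r*p) (r*q) (v + s*u) (s*v) (z + t*w) (t*z) r s t x) x := by
  have h := ((hasDerivAt_term p q r x).add (hasDerivAt_term u v s x)).add (hasDerivAt_term w z t x)
  exact h

lemma deriv_es (p q u v w z r s t : ℂ) :
    deriv (es p q u v w z r s t) = es (q + r*p) (r*q) (v + s*u) (s*v) (z + t*w) (t*z) r s t := by
  funext x
  exact (hasDerivAt_es p q u v w z r s t x).deriv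

lemma contDiff_es (p q u v w z r s t : ℂ) (n : ℕ∞) : ContDiff ℝ n (es p q u v w z r s t) := by
  have hre : ContDiff ℝ n (fun x : ℝ => (x : ℂ)) := Complex.ofRealCLM.contDiff
  have hexp : ∀ c : ℂ, ContDiff ℝ n (fun x : ℝ => Complex.exp (c*x)) := fun c =>
    ((Complex.contDiff_exp (𝕜 := ℂ)).restrict_scalars ℝ).comp ((contDiff_const.mul hre))
  have hlin : ∀ a b : ℂ, ContDiff ℝ n (fun x : ℝ => a + b*(x:ℂ)) := fun a b =>
    contDiff_const.add (contDiff_const.mul hre)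
  exact (((hlin p q).mul (hexp r)).add ((hlin u v).mul (hexp s))).add ((hlin w z).mul (hexp t))

lemma iteratedDeriv_three (f : ℝ → ℂ) : iteratedDeriv 3 f = deriv (deriv (deriv f)) := by
  simp [iteratedDeriv_succ, iteratedDeriv_zero]


lemma lip (lam : ℂ) :
    LipschitzWith (‖lam‖₊ + 1) (fun p : ℂ × ℂ × ℂ => (p.2.1, p.2.2, -lam * p.1 - p.2.1)) := by
  apply LipschitzWith.of_dist_le_mul
  intro x y
  have h1 : dist x.1 y.1 ≤ dist x y := le_max_left _ _
  have h2 : dist x.2 y.2 ≤ dist x y := le_max_right _ _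
  have h21 : dist x.2.1 y.2.1 ≤ dist x y := (le_max_left _ _).trans h2
  have h22 : dist x.2.2 y.2.2 ≤ dist x y := (le_max_right _ _).trans h2
  have hd : (0:ℝ) ≤ dist x y := dist_nonneg
  have h3 : dist (-lam * x.1 - x.2.1) (-lam * y.1 - y.2.1) ≤ (‖lam‖ + 1) * dist x y := by
    rw [dist_eq_norm]
    have : -lam * x.1 - x.2.1 - (-lam * y.1 - y.2.1) = -lam * (x.1 - y.1) - (x.2.1 - y.2.1) := by
      ring
    rw [this]
    calc ‖-lam * (x.1 - y.1) - (x.2.1 - y.2.1)‖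
        ≤ ‖-lam * (x.1 - y.1)‖ + ‖x.2.1 - y.2.1‖ := norm_sub_le _ _
      _ = ‖lam‖ * ‖x.1 - y.1‖ + ‖x.2.1 - y.2.1‖ := by rw [norm_mul, norm_neg]
      _ ≤ ‖lam‖ * dist x y + dist x y := by
          rw [← dist_eq_norm, ← dist_eq_norm]
          gcongr
      _ = (‖lam‖ + 1) * dist x y := by ring
  have hK : ((‖lam‖₊ + 1 : ℝ≥0) : ℝ) = ‖lam‖ + 1 := by push_cast; rfl
  rw [hK]
  have hb : (1:ℝ) ≤ ‖lam‖ + 1 := le_add_of_nonneg_left (norm_nonneg lam)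
  calc dist ((x.2.1, x.2.2, -lam * x.1 - x.2.1)) ((y.2.1, y.2.2, -lam * y.1 - y.2.1))
      = max (dist x.2.1 y.2.1) (max (dist x.2.2 y.2.2) (dist (-lam * x.1 - x.2.1) (-lam * y.1 - y.2.1))) := rfl
    _ ≤ (‖lam‖ + 1) * dist x y := by
        apply max_le
        · nlinarith
        · apply max_le
          · nlinarith
          · exact h3

lemma ode_eqOn {lam : ℂ} {L : ℝ} {f g : ℝ → ℂ}
    (hf : ContDiff ℝ 3 f) (hg : ContDiff ℝ 3 g)
    (hfode : ∀ x ∈ Icc (0:ℝ) L, lam * f x + deriv f x + deriv (deriv (deriv f)) x = 0)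
    (hgode : ∀ x ∈ Icc (0:ℝ) L, lam * g x + deriv g x + deriv (deriv (deriv g)) x = 0)
    (h0 : f 0 = g 0) (h1 : deriv f 0 = deriv g 0)
    (h2 : deriv (deriv f) 0 = deriv (deriv g) 0) :
    EqOn f g (Icc (0:ℝ) L) := by
  have key : ∀ h : ℝ → ℂ, ContDiff ℝ 3 h →
      (Differentiable ℝ h ∧ Differentiable ℝ (deriv h) ∧ Differentiable ℝ (deriv (deriv h))) := by
    intro h hh
    have e1 : ContDiff ℝ ((2:ℕ) + 1) h := by exact_mod_cast hh
    have e1' := (contDiff_succ_iff_deriv.mp e1).2.2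
    have e2 : ContDiff ℝ ((1:ℕ) + 1) (deriv h) := by exact_mod_cast e1'
    have e2' := (contDiff_succ_iff_deriv.mp e2).2.2
    have e3 : ContDiff ℝ ((0:ℕ) + 1) (deriv (deriv h)) := by exact_mod_cast e2'
    exact ⟨hh.differentiable (by norm_num), e1'.differentiable (by norm_num),
      e2'.differentiable (by norm_num)⟩
  obtain ⟨df0, df1, df2⟩ := key f hf
  obtain ⟨dg0, dg1, dg2⟩ := key g hg
  set F : ℝ → ℂ × ℂ × ℂ := fun x => (f x, deriv f x, deriv (deriv f) x) with hF
  set G : ℝ → ℂ × ℂ × ℂ := fun x => (g x, deriv g x, deriv (deriv g) x) with hG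
  set v : ℝ → ℂ × ℂ × ℂ → ℂ × ℂ × ℂ :=
    fun _ p => (p.2.1, p.2.2, -lam * p.1 - p.2.1) with hv
  have hFd : ∀ h : ℝ → ℂ, Differentiable ℝ h → Differentiable ℝ (deriv h) →
      Differentiable ℝ (deriv (deriv h)) →
      ∀ t : ℝ, HasDerivAt (fun x => (h x, deriv h x, deriv (deriv h) x))
        (deriv h t, deriv (deriv h) t, deriv (deriv (deriv h)) t) t := by
    intro h d0 d1 d2 t
    exact ((d0 t).hasDerivAt).prodMk (((d1 t).hasDerivAt).prodMk ((d2 t).hasDerivAt))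
  have hEq : EqOn F G (Icc 0 L) := by
    apply ODE_solution_unique (v := v) (K := ‖lam‖₊ + 1) (fun _ => lip lam)
    · exact Continuous.continuousOn (by
        apply Continuous.prodMk df0.continuous
        exact Continuous.prodMk df1.continuous df2.continuous)
    · intro t ht
      have hd := (hFd f df0 df1 df2 t).hasDerivWithinAt (s := Ici t)
      have ht' : t ∈ Icc (0:ℝ) L := ⟨ht.1, le_of_lt ht.2⟩
      have he : deriv (deriv (deriv f)) t = -lam * f t - deriv f t := by
        have := hfode t ht'
        linear_combination this
      rw [he] at hd
      exact hd
    · exact Continuous.continuousOn (by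
        apply Continuous.prodMk dg0.continuous
        exact Continuous.prodMk dg1.continuous dg2.continuous)
    · intro t ht
      have hd := (hFd g dg0 dg1 dg2 t).hasDerivWithinAt (s := Ici t)
      have ht' : t ∈ Icc (0:ℝ) L := ⟨ht.1, le_of_lt ht.2⟩
      have he : deriv (deriv (deriv g)) t = -lam * g t - deriv g t := by
        have := hgode t ht'
        linear_combination this
      rw [he] at hd
      exact hd
    · simp only [hF, hG, h0, h1, h2]
  intro t ht
  have := hEq ht
  exact congrArg Prod.fst this

lemma exists_cubic_root (lam : ℂ) : ∃ μ : ℂ, μ^3 + μ + lam = 0 := by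
  have hdeg : ((X:ℂ[X])^3 + X + C lam).degree = 3 := by
    rw [add_assoc]
    rw [Polynomial.degree_add_eq_left_of_degree_lt]
    · exact Polynomial.degree_X_pow 3
    · rw [Polynomial.degree_X_pow]
      rw [Polynomial.degree_X_add_C]
      norm_num
  obtain ⟨z, hz⟩ := Complex.exists_root (f := (X:ℂ[X])^3 + X + C lam) (by rw [hdeg]; norm_num)
  refine ⟨z, ?_⟩
  have := hz
  simp only [Polynomial.IsRoot, Polynomial.eval_add, Polynomial.eval_pow, Polynomial.eval_X,
    Polynomial.eval_C] at this
  exact this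

lemma exists_roots (lam : ℂ) : ∃ μ₁ μ₂ μ₃ : ℂ,
    μ₁ + μ₂ + μ₃ = 0 ∧ μ₁*μ₂ + μ₁*μ₃ + μ₂*μ₃ = 1 ∧
    μ₁^3 + μ₁ + lam = 0 ∧ μ₂^3 + μ₂ + lam = 0 ∧ μ₃^3 + μ₃ + lam = 0 := by
  obtain ⟨μ₁, h1⟩ := exists_cubic_root lam
  obtain ⟨d, hd⟩ := IsAlgClosed.exists_pow_nat_eq (-3*μ₁^2 - 4 : ℂ) (n := 2) (by norm_num)
  refine ⟨μ₁, (-μ₁ + d)/2, (-μ₁ - d)/2, by ring, by linear_combination (-1/4 : ℂ) * hd, h1, ?_, ?_⟩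
  · linear_combination h1 + ((d - 3*μ₁)/8) * hd
  · linear_combination h1 + ((-d - 3*μ₁)/8) * hd

lemma int_lemma (m n : ℤ) (hm : m ≠ 0) (hn : n ≠ 0) (hmn : m ≠ n) :
    ∃ k l : ℕ, 1 ≤ k ∧ 1 ≤ l ∧ (k:ℤ)^2 + (l:ℤ)^2 + (k:ℤ)*(l:ℤ) = m^2 - m*n + n^2 := by
  rcases lt_or_gt_of_ne hm with hm' | hm' <;> rcases lt_or_gt_of_ne hn with hn' | hn'
  · -- m < 0, n < 0
    rcases lt_or_gt_of_ne hmn with h | h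
    · refine ⟨(-n).toNat, (n-m).toNat, by omega, by omega, ?_⟩
      have e1 : ((-n).toNat : ℤ) = -n := Int.toNat_of_nonneg (by omega)
      have e2 : ((n-m).toNat : ℤ) = n - m := Int.toNat_of_nonneg (by omega)
      rw [e1, e2]; ring
    · refine ⟨(m-n).toNat, (-m).toNat, by omega, by omega, ?_⟩
      have e1 : ((m-n).toNat : ℤ) = m - n := Int.toNat_of_nonneg (by omega)
      have e2 : ((-m).toNat : ℤ) = -m := Int.toNat_of_nonneg (by omega)
      rw [e1, e2]; ring
  · -- m < 0 < n
    refine ⟨(-m).toNat, n.toNat, by omega, by omega, ?_⟩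
    have e1 : ((-m).toNat : ℤ) = -m := Int.toNat_of_nonneg (by omega)
    have e2 : (n.toNat : ℤ) = n := Int.toNat_of_nonneg (by omega)
    rw [e1, e2]; ring
  · -- n < 0 < m
    refine ⟨m.toNat, (-n).toNat, by omega, by omega, ?_⟩
    have e1 : (m.toNat : ℤ) = m := Int.toNat_of_nonneg (by omega)
    have e2 : ((-n).toNat : ℤ) = -n := Int.toNat_of_nonneg (by omega)
    rw [e1, e2]; ring
  · -- 0 < m, 0 < n
    rcases lt_or_gt_of_ne hmn with h | h
    · refine ⟨m.toNat, (n-m).toNat, by omega, by omega, ?_⟩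
      have e1 : (m.toNat : ℤ) = m := Int.toNat_of_nonneg (by omega)
      have e2 : ((n-m).toNat : ℤ) = n - m := Int.toNat_of_nonneg (by omega)
      rw [e1, e2]; ring
    · refine ⟨n.toNat, (m-n).toNat, by omega, by omega, ?_⟩
      have e1 : (n.toNat : ℤ) = n := Int.toNat_of_nonneg (by omega)
      have e2 : ((m-n).toNat : ℤ) = m - n := Int.toNat_of_nonneg (by omega)
      rw [e1, e2]; ring


lemma exists_ne_zero {f : ℝ → ℂ} {L : ℝ} (hL : 0 < L)
    (hf1 : Differentiable ℝ f) (hf2 : Differentiable ℝ (deriv f))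
    (hcont : Continuous (deriv (deriv f))) (hne : deriv (deriv f) 0 ≠ 0) :
    ∃ x ∈ Icc (0:ℝ) L, f x ≠ 0 := by
  by_contra hcon
  push_neg at hcon
  have h1 : ∀ x ∈ Ioo (0:ℝ) L, deriv f x = 0 := by
    intro x hx
    have hev : f =ᶠ[nhds x] (fun _ => (0:ℂ)) :=
      Filter.eventuallyEq_of_mem (isOpen_Ioo.mem_nhds hx)
        (fun y hy => hcon y (Ioo_subset_Icc_self hy))
    rw [hev.deriv_eq, deriv_const]
  have h2 : ∀ x ∈ Ioo (0:ℝ) L, deriv (deriv f) x = 0 := by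
    intro x hx
    have hev : deriv f =ᶠ[nhds x] (fun _ => (0:ℂ)) :=
      Filter.eventuallyEq_of_mem (isOpen_Ioo.mem_nhds hx) (fun y hy => h1 y hy)
    rw [hev.deriv_eq, deriv_const]
  have hclos : EqOn (deriv (deriv f)) (fun _ => (0:ℂ)) (closure (Ioo (0:ℝ) L)) :=
    Set.EqOn.closure (fun x hx => h2 x hx) hcont continuous_const
  rw [closure_Ioo hL.ne] at hclos
  exact hne (hclos (left_mem_Icc.mpr hL.le))

lemma deriv_eq_at_endpoint {f g : ℝ → ℂ} {L : ℝ} (hL : 0 < L)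
    (h : EqOn f g (Icc (0:ℝ) L)) (hf : DifferentiableAt ℝ f L) (hg : DifferentiableAt ℝ g L) :
    deriv f L = deriv g L := by
  have hu : UniqueDiffWithinAt ℝ (Icc (0:ℝ) L) L :=
    (uniqueDiffOn_Icc hL) L (right_mem_Icc.mpr hL.le)
  rw [← hf.derivWithin hu, ← hg.derivWithin hu]
  exact derivWithin_congr h (h (right_mem_Icc.mpr hL.le))


open Complex in
lemma reverse {L : ℝ} (hL : 0 < L) (h : ∃ k l : ℕ, 1 ≤ k ∧ 1 ≤ l ∧
      L = 2 * Real.pi * Real.sqrt (((k : ℝ)^2 + (l : ℝ)^2 + (k : ℝ) * (l : ℝ)) / 3)) :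
    ∃ lam : ℂ, ∃ y : ℝ → ℂ, ContDiff ℝ 3 y ∧ (∃ x ∈ Set.Icc (0:ℝ) L, y x ≠ 0) ∧
      (∀ x ∈ Set.Icc (0:ℝ) L, lam * y x + deriv y x + iteratedDeriv 3 y x = 0) ∧
      y 0 = 0 ∧ deriv y 0 = 0 ∧ y L = 0 ∧ deriv y L = 0 := by
  obtain ⟨k, l, hk, hl, hLf⟩ := h
  have hLne : L ≠ 0 := hL.ne'
  have hkR : (0:ℝ) < k := by exact_mod_cast hk
  have hlR : (0:ℝ) < l := by exact_mod_cast hl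
  set a : ℝ := 2*Real.pi*k/L with ha
  set b : ℝ := 2*Real.pi*l/L with hb
  have hapos : 0 < a := by
    apply div_pos _ hL
    positivity
  have hbpos : 0 < b := by
    apply div_pos _ hL
    positivity
  have hL2 : L^2 = (2*Real.pi)^2 * (((k : ℝ)^2 + (l : ℝ)^2 + (k : ℝ) * (l : ℝ)) / 3) := by
    rw [hLf, mul_pow, Real.sq_sqrt (by positivity)]
  have hL2' : 3 * L^2 = (2*Real.pi)^2 * ((k : ℝ)^2 + (l : ℝ)^2 + (k : ℝ) * (l : ℝ)) := by
    rw [hL2]; ring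
  have hab : a^2 + a*b + b^2 = 3 := by
    have e : a^2 + a*b + b^2 = 3 * L^2 / L^2 := by
      rw [ha, hb, hL2']; ring
    rw [e, mul_div_assoc, div_self (pow_ne_zero 2 hLne), mul_one]
  have habC : (a:ℂ)^2 + (a:ℂ)*(b:ℂ) + (b:ℂ)^2 = 3 := by exact_mod_cast congrArg Complex.ofReal hab
  set aC : ℂ := (a:ℂ) with haC
  set bC : ℂ := (b:ℂ) with hbC
  set η₁ : ℂ := (aC - bC)/3 - aC with hη₁
  set η₂ : ℂ := (aC - bC)/3 with hη₂
  set η₃ : ℂ := (aC - bC)/3 + bC with hη₃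
  set μ₁ : ℂ := Complex.I * η₁ with hμ₁
  set μ₂ : ℂ := Complex.I * η₂ with hμ₂
  set μ₃ : ℂ := Complex.I * η₃ with hμ₃
  set lam : ℂ := Complex.I * (η₂^3 - η₂) with hlam
  set A₁ : ℂ := -bC with hA₁
  set A₂ : ℂ := aC + bC with hA₂
  set A₃ : ℂ := -aC with hA₃
  have c₁ : lam + μ₁ + μ₁^3 = 0 := by
    rw [hlam, hμ₁, hη₁, hη₂]
    linear_combination (Complex.I*aC/3) * habC +
      (Complex.I*((aC - bC)/3 - aC)^3)*Complex.I_sq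
  have c₂ : lam + μ₂ + μ₂^3 = 0 := by
    rw [hlam, hμ₂, hη₂]
    linear_combination (Complex.I*((aC - bC)/3)^3)*Complex.I_sq
  have c₃ : lam + μ₃ + μ₃^3 = 0 := by
    rw [hlam, hμ₃, hη₃, hη₂]
    linear_combination (-Complex.I*bC/3) * habC +
      (Complex.I*((aC - bC)/3 + bC)^3)*Complex.I_sq
  set y : ℝ → ℂ := es A₁ 0 A₂ 0 A₃ 0 μ₁ μ₂ μ₃ with hy
  have hdy : deriv y = es (0 + μ₁*A₁) (μ₁*0) (0 + μ₂*A₂) (μ₂*0) (0 + μ₃*A₃) (μ₃*0) μ₁ μ₂ μ₃ := by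
    rw [hy, deriv_es]
  have hddy : deriv (deriv y) =
      es (μ₁*0 + μ₁*(0 + μ₁*A₁)) (μ₁*(μ₁*0)) (μ₂*0 + μ₂*(0 + μ₂*A₂)) (μ₂*(μ₂*0))
        (μ₃*0 + μ₃*(0 + μ₃*A₃)) (μ₃*(μ₃*0)) μ₁ μ₂ μ₃ := by
    rw [hdy, deriv_es]
  have hdddy : deriv (deriv (deriv y)) =
      es (μ₁*(μ₁*0) + μ₁*(μ₁*0 + μ₁*(0 + μ₁*A₁))) (μ₁*(μ₁*(μ₁*0)))
        (μ₂*(μ₂*0) + μ₂*(μ₂*0 + μ₂*(0 + μ₂*A₂))) (μ₂*(μ₂*(μ₂*0)))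
        (μ₃*(μ₃*0) + μ₃*(μ₃*0 + μ₃*(0 + μ₃*A₃))) (μ₃*(μ₃*(μ₃*0))) μ₁ μ₂ μ₃ := by
    rw [hddy, deriv_es]
  have hy3 : ContDiff ℝ 3 y := by
    rw [hy]; exact_mod_cast contDiff_es A₁ 0 A₂ 0 A₃ 0 μ₁ μ₂ μ₃ 3
  -- boundary values at 0
  have hy0 : y 0 = 0 := by
    rw [hy]
    simp only [es, Complex.ofReal_zero, mul_zero, Complex.exp_zero, add_zero, mul_one]
    rw [hA₁, hA₂, hA₃]; ring
  have hdy0 : deriv y 0 = 0 := by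
    rw [hdy]
    simp only [es, Complex.ofReal_zero, mul_zero, Complex.exp_zero, add_zero, mul_one]
    rw [hA₁, hA₂, hA₃, hμ₁, hμ₂, hμ₃, hη₁, hη₂, hη₃]; ring
  -- ODE
  have hode : ∀ x : ℝ, lam * y x + deriv y x + deriv (deriv (deriv y)) x = 0 := by
    intro x
    rw [hy, hdy, deriv_es, deriv_es]
    simp only [es]
    linear_combination ((A₁ + 0*(x:ℂ)) * Complex.exp (μ₁*x)) * c₁ +
      ((A₂ + 0*(x:ℂ)) * Complex.exp (μ₂*x)) * c₂ +
      ((A₃ + 0*(x:ℂ)) * Complex.exp (μ₃*x)) * c₃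
  -- equal exponentials at L
  have haL : a * L = 2*Real.pi*k := by rw [ha]; field_simp
  have hbL : b * L = 2*Real.pi*l := by rw [hb]; field_simp
  have haLC : aC * (L:ℂ) = 2*(Real.pi:ℂ)*(k:ℂ) := by
    rw [haC]; exact_mod_cast congrArg Complex.ofReal haL
  have hbLC : bC * (L:ℂ) = 2*(Real.pi:ℂ)*(l:ℂ) := by
    rw [hbC]; exact_mod_cast congrArg Complex.ofReal hbL
  have hE12 : Complex.exp (μ₁*L) = Complex.exp (μ₂*L) := by
    have e1 : μ₁*(L:ℂ) = μ₂*L + (-(k:ℤ) : ℤ)*(2*Real.pi*Complex.I) := by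
      rw [hμ₁, hμ₂, hη₁, hη₂]
      push_cast
      linear_combination -Complex.I * haLC
    rw [e1, Complex.exp_add, Complex.exp_int_mul_two_pi_mul_I, mul_one]
  have hE32 : Complex.exp (μ₃*L) = Complex.exp (μ₂*L) := by
    have e1 : μ₃*(L:ℂ) = μ₂*L + ((l:ℤ) : ℤ)*(2*Real.pi*Complex.I) := by
      rw [hμ₃, hμ₂, hη₃, hη₂]
      push_cast
      linear_combination Complex.I * hbLC
    rw [e1, Complex.exp_add, Complex.exp_int_mul_two_pi_mul_I, mul_one]
  have hyL : y L = 0 := by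
    rw [hy]
    simp only [es, hE12, hE32]
    rw [hA₁, hA₂, hA₃]; ring
  have hdyL : deriv y L = 0 := by
    rw [hdy]
    simp only [es, hE12, hE32]
    rw [hA₁, hA₂, hA₃, hμ₁, hμ₂, hμ₃, hη₁, hη₂, hη₃]; ring
  -- nonvanishing
  have hdd0 : deriv (deriv y) 0 = ((a*b*(a+b) : ℝ) : ℂ) := by
    rw [hddy]
    simp only [es, Complex.ofReal_zero, mul_zero, Complex.exp_zero, add_zero, mul_one]
    rw [hA₁, hA₂, hA₃, hμ₁, hμ₂, hμ₃, hη₁, hη₂, hη₃]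
    push_cast
    linear_combination (-(aC*bC*(aC+bC))) * Complex.I_sq
  have hddne : deriv (deriv y) 0 ≠ 0 := by
    rw [hdd0]
    exact_mod_cast (by positivity : a*b*(a+b) ≠ 0)
  have hnon : ∃ x ∈ Set.Icc (0:ℝ) L, y x ≠ 0 := by
    apply exists_ne_zero hL
    · exact hy3.differentiable (by norm_num)
    · rw [hdy]
      exact (contDiff_es _ _ _ _ _ _ _ _ _ 1).differentiable (by norm_num)
    · rw [hddy]
      exact (contDiff_es _ _ _ _ _ _ _ _ _ 0).continuous
    · exact hddne
  refine ⟨lam, y, hy3, hnon, ?_, hy0, hdy0, hyL, hdyL⟩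
  intro x hx
  rw [iteratedDeriv_three]
  exact hode x

lemma diff3 {h : ℝ → ℂ} (hh : ContDiff ℝ 3 h) :
    Differentiable ℝ h ∧ Differentiable ℝ (deriv h) ∧ Differentiable ℝ (deriv (deriv h)) := by
  have e1 : ContDiff ℝ ((2:ℕ) + 1) h := by exact_mod_cast hh
  have e1' := (contDiff_succ_iff_deriv.mp e1).2.2
  have e2 : ContDiff ℝ ((1:ℕ) + 1) (deriv h) := by exact_mod_cast e1'
  have e2' := (contDiff_succ_iff_deriv.mp e2).2.2
  exact ⟨hh.differentiable (by norm_num), e1'.differentiable (by norm_num),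
    e2'.differentiable (by norm_num)⟩

lemma const_mul_deriv {D : ℂ} {f : ℝ → ℂ} (h1 : Differentiable ℝ f) :
    deriv (fun x => D * f x) = fun x => D * deriv f x :=
  funext fun x => deriv_const_mul D (h1 x)

open Complex in
lemma double_case {L : ℝ} (hL : 0 < L) {lam r : ℂ} {y : ℝ → ℂ}
    (h3r : 3*r^2 + 1 = 0) (hr : r^3 + r + lam = 0)
    (hy3 : ContDiff ℝ 3 y)
    (hode : ∀ x ∈ Icc (0:ℝ) L, lam * y x + deriv y x + deriv (deriv (deriv y)) x = 0)
    (hy0 : y 0 = 0) (hdy0 : deriv y 0 = 0) (hyL : y L = 0) (hdyL : deriv y L = 0)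
    (hc : deriv (deriv y) 0 ≠ 0) : False := by
  set c : ℂ := deriv (deriv y) 0 with hcdef
  set s : ℂ := -2*r with hsdef
  have hs : s^3 + s + lam = 0 := by rw [hsdef]; linear_combination hr + (-3*r)*h3r
  set z : ℝ → ℂ := es (c/3) (-c*r) (-(c/3)) 0 0 0 r s s with hz
  have hdz : deriv z = es (-c*r + r*(c/3)) (r*(-c*r)) (0 + s*(-(c/3))) (s*0) (0 + s*0) (s*0) r s s := by
    rw [hz, deriv_es]
  have hz3 : ContDiff ℝ 3 z := by rw [hz]; exact_mod_cast contDiff_es _ _ _ _ _ _ _ _ _ 3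
  have hz0 : z 0 = 0 := by
    rw [hz]; simp only [es, Complex.ofReal_zero, mul_zero, Complex.exp_zero, add_zero, mul_one]
    ring
  have hdz0 : deriv z 0 = 0 := by
    rw [hdz]; simp only [es, Complex.ofReal_zero, mul_zero, Complex.exp_zero, add_zero, mul_one]
    rw [hsdef]; ring
  have hddz0 : deriv (deriv z) 0 = c := by
    rw [hdz, deriv_es]
    simp only [es, Complex.ofReal_zero, mul_zero, Complex.exp_zero, add_zero, mul_one]
    rw [hsdef]; linear_combination (-c) * h3r
  have hodez : ∀ x : ℝ, lam * z x + deriv z x + deriv (deriv (deriv z)) x = 0 := by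
    intro x
    rw [hz, deriv_es, deriv_es, deriv_es]
    simp only [es]
    rw [hsdef]
    have hs' : (-2*r)^3 + (-2*r) + lam = 0 := by linear_combination hr + (-3*r)*h3r
    linear_combination ((c/3 + (-c*r)*(x:ℂ)) * Complex.exp (r*x)) * hr
      + ((-c*r) * Complex.exp (r*x)) * h3r
      + ((-(c/3)) * Complex.exp ((-2*r)*x)) * hs'
  have hEq : EqOn y z (Icc (0:ℝ) L) := by
    apply ode_eqOn hy3 hz3 hode (fun x _ => hodez x)
    · rw [hy0, hz0]
    · rw [hdy0, hdz0]
    · rw [← hcdef, hddz0]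
  have hzL : z L = 0 := by rw [← hEq (right_mem_Icc.mpr hL.le)]; exact hyL
  have hdzL : deriv z L = 0 := by
    rw [← deriv_eq_at_endpoint hL hEq
      ((hy3.differentiable (by norm_num)) L)
      ((hz3.differentiable (by norm_num)) L)]
    exact hdyL
  -- extract equations
  rw [hz] at hzL
  rw [hdz] at hdzL
  simp only [es] at hzL hdzL
  have hLC : ((L:ℝ):ℂ) ≠ 0 := Complex.ofReal_ne_zero.mpr hL.ne'
  have hkey : (c * (L:ℂ)) * Complex.exp (r*(L:ℝ)) = 0 := by
    rw [hsdef] at hzL hdzL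
    linear_combination hdzL + (2*r)*hzL + ((L:ℂ)*c*Complex.exp (r*(L:ℝ)))*h3r
  rcases mul_eq_zero.mp hkey with h | h
  · rcases mul_eq_zero.mp h with h' | h'
    · exact hc h'
    · exact hLC h'
  · exact Complex.exp_ne_zero _ h


open Complex in
lemma distinct_case {L : ℝ} (hL : 0 < L) {lam μ₁ μ₂ μ₃ : ℂ} {y : ℝ → ℂ}
    (h12 : μ₁ ≠ μ₂) (h13 : μ₁ ≠ μ₃) (h23 : μ₂ ≠ μ₃)
    (s0 : μ₁ + μ₂ + μ₃ = 0) (s1 : μ₁*μ₂ + μ₁*μ₃ + μ₂*μ₃ = 1)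
    (e1 : μ₁^3 + μ₁ + lam = 0) (e2 : μ₂^3 + μ₂ + lam = 0) (e3 : μ₃^3 + μ₃ + lam = 0)
    (hy3 : ContDiff ℝ 3 y)
    (hode : ∀ x ∈ Icc (0:ℝ) L, lam * y x + deriv y x + deriv (deriv (deriv y)) x = 0)
    (hy0 : y 0 = 0) (hdy0 : deriv y 0 = 0) (hyL : y L = 0) (hdyL : deriv y L = 0)
    (hc : deriv (deriv y) 0 ≠ 0) :
    ∃ m n : ℤ, m ≠ 0 ∧ n ≠ 0 ∧ m ≠ n ∧
      3*(L:ℂ)^2 = (2*(Real.pi:ℂ))^2 * ((m:ℂ)^2 - (m:ℂ)*(n:ℂ) + (n:ℂ)^2) := by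
  set c : ℂ := deriv (deriv y) 0 with hcdef
  set D : ℂ := (μ₁-μ₂)*(μ₂-μ₃)*(μ₃-μ₁) with hD
  have hDne : D ≠ 0 := by
    rw [hD]
    exact mul_ne_zero (mul_ne_zero (sub_ne_zero.mpr h12) (sub_ne_zero.mpr h23))
      (sub_ne_zero.mpr (fun h => h13 h.symm))
  obtain ⟨hdy1, hdy2, hdy3'⟩ := diff3 hy3
  set Y : ℝ → ℂ := fun x => D * y x with hY
  have hY3 : ContDiff ℝ 3 Y := contDiff_const.mul hy3
  have hdY : deriv Y = fun x => D * deriv y x := const_mul_deriv hdy1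
  have hddY : deriv (deriv Y) = fun x => D * deriv (deriv y) x := by
    rw [hdY]; exact const_mul_deriv hdy2
  have hdddY : deriv (deriv (deriv Y)) = fun x => D * deriv (deriv (deriv y)) x := by
    rw [hddY]; exact const_mul_deriv hdy3'
  have hodeY : ∀ x ∈ Icc (0:ℝ) L, lam * Y x + deriv Y x + deriv (deriv (deriv Y)) x = 0 := by
    intro x hx
    rw [hdddY, hdY, hY]
    simp only
    linear_combination D * (hode x hx)
  set A₁ : ℂ := -c*(μ₂-μ₃) with hA₁
  set A₂ : ℂ := -c*(μ₃-μ₁) with hA₂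
  set A₃ : ℂ := -c*(μ₁-μ₂) with hA₃
  set z : ℝ → ℂ := es A₁ 0 A₂ 0 A₃ 0 μ₁ μ₂ μ₃ with hz
  have hz3 : ContDiff ℝ 3 z := by rw [hz]; exact_mod_cast contDiff_es _ _ _ _ _ _ _ _ _ 3
  have hdz : deriv z = es (0 + μ₁*A₁) (μ₁*0) (0 + μ₂*A₂) (μ₂*0) (0 + μ₃*A₃) (μ₃*0) μ₁ μ₂ μ₃ := by
    rw [hz, deriv_es]
  have hz0 : z 0 = 0 := by
    rw [hz]; simp only [es, Complex.ofReal_zero, mul_zero, Complex.exp_zero, add_zero, mul_one]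
    rw [hA₁, hA₂, hA₃]; ring
  have hdz0 : deriv z 0 = 0 := by
    rw [hdz]; simp only [es, Complex.ofReal_zero, mul_zero, Complex.exp_zero, add_zero, mul_one]
    rw [hA₁, hA₂, hA₃]; ring
  have hddz0 : deriv (deriv z) 0 = D * c := by
    rw [hdz, deriv_es]
    simp only [es, Complex.ofReal_zero, mul_zero, Complex.exp_zero, add_zero, mul_one]
    rw [hA₁, hA₂, hA₃, hD]; ring
  have hodez : ∀ x : ℝ, lam * z x + deriv z x + deriv (deriv (deriv z)) x = 0 := by
    intro x
    rw [hz, deriv_es, deriv_es, deriv_es]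
    simp only [es]
    linear_combination ((A₁ + 0*(x:ℂ)) * Complex.exp (μ₁*x)) * e1 +
      ((A₂ + 0*(x:ℂ)) * Complex.exp (μ₂*x)) * e2 +
      ((A₃ + 0*(x:ℂ)) * Complex.exp (μ₃*x)) * e3
  have hEq : EqOn Y z (Icc (0:ℝ) L) := by
    apply ode_eqOn hY3 hz3 hodeY (fun x _ => hodez x)
    · simp [hY, hz0, hy0]
    · simp [hdY, hdz0, hdy0]
    · simp only [hddz0, hddY, hcdef]
  have hzL : z L = 0 := by
    rw [← hEq (right_mem_Icc.mpr hL.le)]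
    simp [hY, hyL]
  have hdzL : deriv z L = 0 := by
    rw [← deriv_eq_at_endpoint hL hEq
      ((hY3.differentiable (by norm_num)) L)
      ((hz3.differentiable (by norm_num)) L), hdY]
    simp [hdyL]
  rw [hz] at hzL
  rw [hdz] at hdzL
  simp only [es] at hzL hdzL
  -- equal exponentials
  set E₁ : ℂ := Complex.exp (μ₁*(L:ℝ)) with hE₁
  set E₂ : ℂ := Complex.exp (μ₂*(L:ℝ)) with hE₂
  set E₃ : ℂ := Complex.exp (μ₃*(L:ℝ)) with hE₃
  have f1 : (μ₂-μ₃)*E₁ + (μ₃-μ₁)*E₂ + (μ₁-μ₂)*E₃ = 0 := by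
    have h' : (-c) * ((μ₂-μ₃)*E₁ + (μ₃-μ₁)*E₂ + (μ₁-μ₂)*E₃) = 0 := by
      rw [hA₁, hA₂, hA₃] at hzL
      linear_combination hzL
    exact (mul_eq_zero.mp h').resolve_left (neg_ne_zero.mpr hc)
  have f2 : (μ₂-μ₃)*μ₁*E₁ + (μ₃-μ₁)*μ₂*E₂ + (μ₁-μ₂)*μ₃*E₃ = 0 := by
    have h' : (-c) * ((μ₂-μ₃)*μ₁*E₁ + (μ₃-μ₁)*μ₂*E₂ + (μ₁-μ₂)*μ₃*E₃) = 0 := by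
      rw [hA₁, hA₂, hA₃] at hdzL
      linear_combination hdzL
    exact (mul_eq_zero.mp h').resolve_left (neg_ne_zero.mpr hc)
  have hE12 : E₁ = E₂ := by
    have g12 : ((μ₂-μ₃)*(μ₃-μ₁)) * (E₁ - E₂) = 0 := by
      linear_combination μ₃ * f1 - f2
    have h23' : (μ₂-μ₃)*(μ₃-μ₁) ≠ 0 :=
      mul_ne_zero (sub_ne_zero.mpr h23) (sub_ne_zero.mpr (fun h => h13 h.symm))
    exact sub_eq_zero.mp ((mul_eq_zero.mp g12).resolve_left h23')
  have hE13 : E₁ = E₃ := by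
    have g13 : ((μ₂-μ₃)*(μ₂-μ₁)) * (E₁ - E₃) = 0 := by
      linear_combination μ₂ * f1 - f2
    have h23' : (μ₂-μ₃)*(μ₂-μ₁) ≠ 0 :=
      mul_ne_zero (sub_ne_zero.mpr h23) (sub_ne_zero.mpr (fun h => h12 h.symm))
    exact sub_eq_zero.mp ((mul_eq_zero.mp g13).resolve_left h23')
  -- integers
  have hLC : ((L:ℝ):ℂ) ≠ 0 := Complex.ofReal_ne_zero.mpr hL.ne'
  have hexp12 : Complex.exp ((μ₂ - μ₁)*(L:ℝ)) = 1 := by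
    rw [sub_mul, Complex.exp_sub, ← hE₂, ← hE₁, ← hE12,
      div_self (by rw [hE₁]; exact Complex.exp_ne_zero _)]
  have hexp13 : Complex.exp ((μ₃ - μ₁)*(L:ℝ)) = 1 := by
    rw [sub_mul, Complex.exp_sub, ← hE₃, ← hE₁, ← hE13,
      div_self (by rw [hE₁]; exact Complex.exp_ne_zero _)]
  obtain ⟨m, hm⟩ := Complex.exp_eq_one_iff.mp hexp12
  obtain ⟨n, hn⟩ := Complex.exp_eq_one_iff.mp hexp13
  have hm0 : m ≠ 0 := by
    intro h0
    rw [h0] at hm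
    simp only [Int.cast_zero, zero_mul] at hm
    rcases mul_eq_zero.mp hm with h' | h'
    · exact h12 (sub_eq_zero.mp h').symm
    · exact hLC h'
  have hn0 : n ≠ 0 := by
    intro h0
    rw [h0] at hn
    simp only [Int.cast_zero, zero_mul] at hn
    rcases mul_eq_zero.mp hn with h' | h'
    · exact h13 (sub_eq_zero.mp h').symm
    · exact hLC h'
  have hmn : m ≠ n := by
    intro h0
    rw [h0] at hm
    have : (μ₃ - μ₂) * (L:ℂ) = 0 := by linear_combination hn - hm
    rcases mul_eq_zero.mp this with h' | h'
    · exact h23 (sub_eq_zero.mp h').symm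
    · exact hLC h'
  refine ⟨m, n, hm0, hn0, hmn, ?_⟩
  -- symmetric-function computation
  set B : ℂ := 2*(Real.pi:ℂ)*Complex.I with hB
  have hBsq : B^2 = -((2*(Real.pi:ℂ))^2) := by
    rw [hB]
    linear_combination (4*((Real.pi:ℝ):ℂ)^2) * Complex.I_sq
  have hA3 : 3*(μ₁*(L:ℂ)) = -((m:ℂ)+(n:ℂ))*B := by
    rw [hB]
    linear_combination (L:ℂ)*s0 - hm - hn
  have h2 : 3*(μ₂*(L:ℂ)) = (2*(m:ℂ)-(n:ℂ))*B := by
    rw [hB]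
    linear_combination (L:ℂ)*s0 - hm - hn + 3*hm
  have h3 : 3*(μ₃*(L:ℂ)) = (2*(n:ℂ)-(m:ℂ))*B := by
    rw [hB]
    linear_combination (L:ℂ)*s0 - hm - hn + 3*hn
  have key : 9*(L:ℂ)^2*(μ₁*μ₂ + μ₁*μ₃ + μ₂*μ₃) =
      (-((m:ℂ)+(n:ℂ))*B)*((2*(m:ℂ)-(n:ℂ))*B) + (-((m:ℂ)+(n:ℂ))*B)*((2*(n:ℂ)-(m:ℂ))*B)
        + ((2*(m:ℂ)-(n:ℂ))*B)*((2*(n:ℂ)-(m:ℂ))*B) := by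
    linear_combination (3*(μ₂*(L:ℂ)) + 3*(μ₃*(L:ℂ))) * hA3 + ((-((m:ℂ)+(n:ℂ))*B) + 3*(μ₃*(L:ℂ))) * h2
      + ((-((m:ℂ)+(n:ℂ))*B) + ((2*(m:ℂ)-(n:ℂ))*B)) * h3
  rw [s1, mul_one] at key
  linear_combination (1/3 : ℂ) * key - ((m:ℂ)^2 - (m:ℂ)*(n:ℂ) + (n:ℂ)^2) * hBsq

end Rosier

open Rosier

/-- The set of critical lengths of Rosier. -/
def IsCriticalLength (x : ℝ) : Prop :=
  ∃ k l : ℕ, 1 ≤ k ∧ 1 ≤ l ∧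
    x = 2 * Real.pi * Real.sqrt (((k : ℝ)^2 + (l : ℝ)^2 + (k : ℝ) * (l : ℝ)) / 3)

theorem stmt9 (L : ℝ) (hL : 0 < L) :
    (∃ lam : ℂ, ∃ y : ℝ → ℂ, ContDiff ℝ 3 y ∧ (∃ x ∈ Set.Icc (0:ℝ) L, y x ≠ 0) ∧
      (∀ x ∈ Set.Icc (0:ℝ) L, lam * y x + deriv y x + iteratedDeriv 3 y x = 0) ∧
      y 0 = 0 ∧ deriv y 0 = 0 ∧ y L = 0 ∧ deriv y L = 0)
    ↔ IsCriticalLength L := by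
  constructor
  · rintro ⟨lam, y, hy3, hne, hodeI, hy0, hdy0, hyL, hdyL⟩
    have hode : ∀ x ∈ Set.Icc (0:ℝ) L, lam * y x + deriv y x + deriv (deriv (deriv y)) x = 0 := by
      intro x hx
      have := hodeI x hx
      rwa [iteratedDeriv_three] at this
    have hc : deriv (deriv y) 0 ≠ 0 := by
      intro h0
      obtain ⟨x, hx, hxne⟩ := hne
      apply hxne
      have hzero : Set.EqOn y (fun _ => (0:ℂ)) (Set.Icc 0 L) := by
        apply ode_eqOn hy3 contDiff_const hode
        · intro t _
          simp [deriv_const']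
        · simpa using hy0
        · simp [deriv_const', hdy0]
        · simp [deriv_const', h0]
      exact hzero hx
    obtain ⟨μ₁, μ₂, μ₃, s0, s1, e1, e2, e3⟩ := exists_roots lam
    by_cases h12 : μ₁ = μ₂
    · exact (double_case hL
        (show 3*μ₁^2 + 1 = 0 by linear_combination (-1)*s1 + (μ₁+μ₂)*s0 + (2*μ₁+μ₂)*h12)
        e1 hy3 hode hy0 hdy0 hyL hdyL hc).elim
    by_cases h13 : μ₁ = μ₃
    · exact (double_case hL
        (show 3*μ₁^2 + 1 = 0 by linear_combination (-1)*s1 + (μ₁+μ₃)*s0 + (2*μ₁+μ₃)*h13)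
        e1 hy3 hode hy0 hdy0 hyL hdyL hc).elim
    by_cases h23 : μ₂ = μ₃
    · exact (double_case hL
        (show 3*μ₂^2 + 1 = 0 by linear_combination (-1)*s1 + (μ₂+μ₃)*s0 + (2*μ₂+μ₃)*h23)
        e2 hy3 hode hy0 hdy0 hyL hdyL hc).elim
    obtain ⟨m, n, hm0, hn0, hmn, hC⟩ :=
      distinct_case hL h12 h13 h23 s0 s1 e1 e2 e3 hy3 hode hy0 hdy0 hyL hdyL hc
    have hreal : 3*L^2 = (2*Real.pi)^2 * ((m:ℝ)^2 - (m:ℝ)*(n:ℝ) + (n:ℝ)^2) := by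
      have h2 : ((3*L^2 : ℝ) : ℂ) =
          (((2*Real.pi)^2 * ((m:ℝ)^2 - (m:ℝ)*(n:ℝ) + (n:ℝ)^2) : ℝ) : ℂ) := by
        push_cast
        linear_combination hC
      exact_mod_cast h2
    obtain ⟨k, l, hk, hl, hkl⟩ := int_lemma m n hm0 hn0 hmn
    have hklR : ((k:ℝ)^2 + (l:ℝ)^2 + (k:ℝ)*(l:ℝ)) = (m:ℝ)^2 - (m:ℝ)*(n:ℝ) + (n:ℝ)^2 := by
      exact_mod_cast congrArg (Int.cast : ℤ → ℝ) hkl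
    refine ⟨k, l, hk, hl, ?_⟩
    calc L = Real.sqrt (L^2) := (Real.sqrt_sq hL.le).symm
      _ = Real.sqrt ((2*Real.pi)^2 * (((k:ℝ)^2+(l:ℝ)^2+(k:ℝ)*(l:ℝ))/3)) := by
          congr 1
          rw [hklR]
          linear_combination (1/3 : ℝ) * hreal
      _ = 2*Real.pi*Real.sqrt (((k:ℝ)^2+(l:ℝ)^2+(k:ℝ)*(l:ℝ))/3) := by
          rw [Real.sqrt_mul (sq_nonneg _), Real.sqrt_sq (by positivity)]
  · intro h
    exact reverse hL h
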